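/- If a simple graph G satisfies property P, then the complement graph of G contains no induced subgraph isomorphic to an odd cycle of length at least 5. -/
import Mathlib


/-- Property `P` of the paper: for any two disjoint edges `(v1,w1)` and
`(v2,w2)` of `G`, if `(v2,v1)` is an edge then `(w2,v1)` or `(w2,w1)` is an
edge of `G`. -/
def SimpleGraph.PropertyP {V : Type*} (G : SimpleGraph V) : Prop :=
  ∀ ⦃v1 w1 v2 w2 : V⦄, G.Adj v1 w1 → G.Adj v2 w2 →
    v1 ≠ v2 → v1 ≠ w2 → w1 ≠ v2 → w1 ≠ w2 →
    G.Adj v2 v1 → (G.Adj w2 v1 ∨ G.Adj w2 w1)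

/-- If a simple graph `G` satisfies property `P`, then the complement of `G`
has no induced subgraph isomorphic to an odd cycle of length at least `5`. -/
theorem compl_no_induced_long_odd_cycle_of_propertyP {V : Type*} (G : SimpleGraph V)
    (hP : G.PropertyP) (n : ℕ) (hn : 5 ≤ n) (hodd : Odd n) :
    IsEmpty (SimpleGraph.cycleGraph n ↪g Gᶜ) := by
  obtain ⟨m, rfl⟩ : ∃ m, n = m + 5 := ⟨n - 5, by omega⟩
  constructor
  intro f
  -- computing remainders modulo `m + 5`
  have hmod : ∀ (k A r : ℕ), A = (m + 5) * k + r → r < m + 5 → A % (m + 5) = r := by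
    intro k A r h hr
    subst h
    rw [Nat.mul_add_mod, Nat.mod_eq_of_lt hr]
  -- nonadjacent distinct cycle vertices map to G-edges
  have key1 : ∀ u v : Fin (m + 5), u ≠ v → ¬(SimpleGraph.cycleGraph (m + 5)).Adj u v →
      G.Adj (f u) (f v) := by
    intro u v hne hcy
    have h1 : ¬ Gᶜ.Adj (f u) (f v) := fun h => hcy (f.map_adj_iff.mp h)
    have h2 : f u ≠ f v := fun h => hne (f.injective h)
    rw [SimpleGraph.compl_adj] at h1
    tauto
  -- adjacent cycle vertices map to non-edges of G
  have key2 : ∀ u v : Fin (m + 5), (SimpleGraph.cycleGraph (m + 5)).Adj u v →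
      ¬ G.Adj (f u) (f v) := by
    intro u v hcy
    exact (f.map_adj_iff.mpr hcy).2
  set a : Fin (m + 5) := ⟨m + 4, by omega⟩ with ha
  set b : Fin (m + 5) := ⟨0, by omega⟩ with hb
  set c : Fin (m + 5) := ⟨1, by omega⟩ with hc
  set d : Fin (m + 5) := ⟨2, by omega⟩ with hd
  have hac : G.Adj (f a) (f c) := by
    apply key1
    · simp only [ha, hc, ne_eq, Fin.mk.injEq]; omega
    · intro h
      rw [SimpleGraph.cycleGraph_adj'] at h
      simp only [ha, hc, Fin.sub_def, Fin.val_mk] at h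
      rw [hmod 1 (m + 5 - 1 + (m + 4)) (m + 3) (by omega) (by omega),
          hmod 0 (m + 5 - (m + 4) + 1) 2 (by omega) (by omega)] at h
      omega
  have hdb : G.Adj (f d) (f b) := by
    apply key1
    · simp only [hd, hb, ne_eq, Fin.mk.injEq]; omega
    · intro h
      rw [SimpleGraph.cycleGraph_adj'] at h
      simp only [hd, hb, Fin.sub_def, Fin.val_mk] at h
      rw [hmod 1 (m + 5 - 0 + 2) 2 (by omega) (by omega),
          hmod 0 (m + 5 - 2 + 0) (m + 3) (by omega) (by omega)] at h
      omega
  have hda : G.Adj (f d) (f a) := by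
    apply key1
    · simp only [hd, ha, ne_eq, Fin.mk.injEq]; omega
    · intro h
      rw [SimpleGraph.cycleGraph_adj'] at h
      simp only [hd, ha, Fin.sub_def, Fin.val_mk] at h
      rw [hmod 0 (m + 5 - (m + 4) + 2) 3 (by omega) (by omega),
          hmod 1 (m + 5 - 2 + (m + 4)) (m + 2) (by omega) (by omega)] at h
      omega
  have hba : ¬ G.Adj (f b) (f a) := by
    apply key2
    rw [SimpleGraph.cycleGraph_adj']
    simp only [hb, ha, Fin.sub_def, Fin.val_mk]
    left
    exact hmod 0 (m + 5 - (m + 4) + 0) 1 (by omega) (by omega)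
  have hbc : ¬ G.Adj (f b) (f c) := by
    apply key2
    rw [SimpleGraph.cycleGraph_adj']
    simp only [hb, hc, Fin.sub_def, Fin.val_mk]
    right
    exact hmod 1 (m + 5 - 0 + 1) 1 (by omega) (by omega)
  have had : f a ≠ f d := fun h => by
    have := f.injective h
    rw [ha, hd, Fin.mk.injEq] at this; omega
  have hab : f a ≠ f b := fun h => by
    have := f.injective h
    rw [ha, hb, Fin.mk.injEq] at this; omega
  have hcd : f c ≠ f d := fun h => by
    have := f.injective h
    rw [hc, hd, Fin.mk.injEq] at this; omega
  have hcb : f c ≠ f b := fun h => by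
    have := f.injective h
    rw [hc, hb, Fin.mk.injEq] at this; omega
  rcases hP hac hdb had hab hcd hcb hda with h | h
  · exact hba h
  · exact hbc h
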